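/- Let f : [ℕ]^{<ω} → Q be eventually constant, with Q finite (or more generally arbitrary), and let Z ⊆ ℕ be infinite. Then there exists a finite set s ⊆ Z such that f(s) = f(t) for every finite set t ⊆ Z having s as a proper initial segment (s ⊏ t). -/

import Mathlib

/-- `seg X n` is the set of the `n` smallest elements of `X`. -/
noncomputable def seg (X : Set ℕ) (n : ℕ) : Finset ℕ :=
  (Finset.range n).image (Nat.nth (· ∈ X))

/-- `f` is eventually constant. -/
def EvConst {Q : Type*} (f : Finset ℕ → Q) : Prop :=
  ∀ X : Set ℕ, X.Infinite → ∃ N, ∀ n > N, f (seg X n) = f (seg X N)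

/-- `fbar` is the limit function of `f`. -/
def IsLimit {Q : Type*} (f : Finset ℕ → Q) (fbar : Set ℕ → Q) : Prop :=
  ∀ X : Set ℕ, X.Infinite → ∃ N, ∀ n ≥ N, f (seg X n) = fbar X

/-- `s` is a proper initial segment of `t`. -/
def PInitSeg (s t : Finset ℕ) : Prop :=
  s ⊆ t ∧ s.card < t.card ∧ ∀ x ∈ s, ∀ y ∈ t, y ∉ s → x < y

/-- `X⁻ = X \ {min X}`. -/
def dropMin (X : Set ℕ) : Set ℕ := X \ {sInf X}

/-- `X^{-i}`: `X` without its `i` smallest elements. -/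
def dropIter (i : ℕ) (X : Set ℕ) : Set ℕ := dropMin^[i] X

/-- `Z/s`: elements of `Z` above all elements of `s`. -/
def after (Z : Set ℕ) (s : Finset ℕ) : Set ℕ := {n ∈ Z | ∀ m ∈ s, m < n}

/-- `Y` is a cofinite subset of `X`. -/
def Cofin (Y X : Set ℕ) : Prop := Y ⊆ X ∧ (X \ Y).Finite

open Classical in
lemma mem_seg_iff {X : Set ℕ} (hX : X.Infinite) {n x : ℕ} :
    x ∈ seg X n ↔ x ∈ X ∧ Nat.count (· ∈ X) x < n := by
  have hX' : (setOf (· ∈ X)).Infinite := by exact hX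
  constructor
  · intro hx
    simp only [seg, Finset.mem_image, Finset.mem_range] at hx
    obtain ⟨k, hk, rfl⟩ := hx
    refine ⟨Nat.nth_mem_of_infinite hX' k, ?_⟩
    rw [Nat.count_nth_of_infinite hX' k]; exact hk
  · rintro ⟨hx, hc⟩
    simp only [seg, Finset.mem_image, Finset.mem_range]
    exact ⟨_, hc, Nat.nth_count hx⟩

open Classical in
lemma seg_eq_self {X : Set ℕ} (hX : X.Infinite) {s : Finset ℕ} (hs : ↑s ⊆ X)
    (h : ∀ x ∈ s, ∀ y ∈ X, y ∉ s → x < y) : seg X s.card = s := by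
  ext x
  rw [mem_seg_iff hX]
  constructor
  · rintro ⟨hxX, hc⟩
    by_contra hxs
    have hsub : s ⊆ (Finset.range x).filter (· ∈ X) := by
      intro y hy
      simp only [Finset.mem_filter, Finset.mem_range]
      exact ⟨h y hy x hxX hxs, hs hy⟩
    have := Finset.card_le_card hsub
    rw [← Nat.count_eq_card_filter_range] at this
    have hr : Nat.count (fun x => x ∈ X) x = Nat.count (Membership.mem X) x := rfl
    omega
  · intro hx
    refine ⟨hs hx, ?_⟩
    have hsub : (Finset.range x).filter (· ∈ X) ⊆ s.erase x := by
      intro y hy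
      simp only [Finset.mem_filter, Finset.mem_range] at hy
      have hys : y ∈ s := by
        by_contra hys
        exact absurd (h x hx y hy.2 hys) (by omega)
      exact Finset.mem_erase.2 ⟨by omega, hys⟩
    have h1 := Finset.card_le_card hsub
    rw [← Nat.count_eq_card_filter_range, Finset.card_erase_of_mem hx] at h1
    have h2 : 1 ≤ s.card := Finset.card_pos.2 ⟨x, hx⟩
    have hr : Nat.count (fun x => x ∈ X) x = Nat.count (Membership.mem X) x := rfl
    omega

lemma PInitSeg.trans {s t u : Finset ℕ} (h1 : PInitSeg s t) (h2 : PInitSeg t u) :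
    PInitSeg s u := by
  obtain ⟨hst, hc1, hl1⟩ := h1
  obtain ⟨htu, hc2, hl2⟩ := h2
  refine ⟨hst.trans htu, hc1.trans hc2, fun x hx y hy hys => ?_⟩
  by_cases hyt : y ∈ t
  · exact hl1 x hx y hyt hys
  · exact hl2 x (hst hx) y hy hyt

theorem stmt2 {Q : Type*} (f : Finset ℕ → Q) (hf : EvConst f)
    (Z : Set ℕ) (hZ : Z.Infinite) :
    ∃ s : Finset ℕ, ↑s ⊆ Z ∧
      ∀ t : Finset ℕ, ↑t ⊆ Z → PInitSeg s t → f s = f t := by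
  by_contra hcon
  push_neg at hcon
  have H : ∀ s : Finset ℕ, ↑s ⊆ Z →
      ∃ t : Finset ℕ, ↑t ⊆ Z ∧ PInitSeg s t ∧ f s ≠ f t := by
    intro s hs
    obtain ⟨t, ht1, ht2, ht3⟩ := hcon s hs
    exact ⟨t, ht1, ht2, ht3⟩
  -- build the chain
  let g : ℕ → {s : Finset ℕ // ↑s ⊆ Z} := fun n =>
    Nat.rec ⟨∅, by simp⟩
      (fun _ p => ⟨(H p.1 p.2).choose, (H p.1 p.2).choose_spec.1⟩) n
  have hstep : ∀ n, PInitSeg (g n).1 (g (n+1)).1 ∧ f (g n).1 ≠ f (g (n+1)).1 := by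
    intro n
    exact ⟨(H (g n).1 (g n).2).choose_spec.2.1, (H (g n).1 (g n).2).choose_spec.2.2⟩
  have hchain : ∀ m n, m < n → PInitSeg (g m).1 (g n).1 := by
    intro m n hmn
    induction n with
    | zero => omega
    | succ k ih =>
      rcases Nat.lt_succ_iff_lt_or_eq.1 hmn with h | h
      · exact (ih h).trans (hstep k).1
      · rw [h]; exact (hstep k).1
  have hcard : ∀ n, n ≤ (g n).1.card := by
    intro n
    induction n with
    | zero => omega
    | succ k ih => have := (hstep k).1.2.1; omega
  set X : Set ℕ := ⋃ n, ((g n).1 : Set ℕ) with hXdef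
  have hgX : ∀ n, ↑(g n).1 ⊆ X := fun n x hx => Set.mem_iUnion.2 ⟨n, hx⟩
  have hXinf : X.Infinite := by
    intro hfin
    have : ∀ n, (g n).1 ⊆ hfin.toFinset := by
      intro n x hx
      exact hfin.mem_toFinset.2 (hgX n hx)
    have h1 := Finset.card_le_card (this (hfin.toFinset.card + 1))
    have h2 := hcard (hfin.toFinset.card + 1)
    omega
  have hseg : ∀ n, seg X (g n).1.card = (g n).1 := by
    intro n
    refine seg_eq_self hXinf (hgX n) ?_
    intro x hx y hy hys
    obtain ⟨k, hk⟩ := Set.mem_iUnion.1 hy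
    have hnk : n < k := by
      by_contra hnk
      push_neg at hnk
      rcases eq_or_lt_of_le hnk with h | h
      · exact hys (h ▸ hk)
      · exact hys ((hchain k n h).1 hk)
    exact (hchain n k hnk).2.2 x hx y hk hys
  obtain ⟨N, hN⟩ := hf X hXinf
  have hc1 : N < (g (N+1)).1.card := by have := hcard (N+1); omega
  have hc2 : N < (g (N+2)).1.card := by have := hcard (N+2); omega
  have e1 : f (g (N+1)).1 = f (seg X N) := by rw [← hseg (N+1)]; exact hN _ hc1
  have e2 : f (g (N+2)).1 = f (seg X N) := by rw [← hseg (N+2)]; exact hN _ hc2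
  exact (hstep (N+1)).2 (e1.trans e2.symm)
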